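/- Let c > 0, K > 0, τ* ∈ ℝ, σ* ∈ ℝ, and let g : ℝ → ℝ be twice continuously differentiable with |g'(y)| ≤ K and |g''(y)| ≤ K for all y, and g'(y) = 0 for y ∉ [σ*, σ*+1]. For τ < τ* and σ ∈ ℝ define u(τ, σ) = ∫_ℝ g(y) · (4πc(τ*−τ))^{−1/2} · exp( −(y − σ − c(τ*−τ))² / (4c(τ*−τ)) ) dy. Then there exists a constant C depending only on c and K such that for all τ < τ* and all σ ∈ ℝ: |∂²_σ u(τ, σ)| ≤ C / (1 + τ* − τ). -/

import Mathlib

open Real MeasureTheory Metric Set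

noncomputable def phi (a : ℝ) (x : ℝ) : ℝ := (4 * π * a) ^ (-(1:ℝ)/2) * Real.exp (-x^2 / (4*a))

lemma phi_nonneg {a : ℝ} (ha : 0 < a) (x : ℝ) : 0 ≤ phi a x := by
  unfold phi; positivity

lemma continuous_phi (a : ℝ) : Continuous (phi a) := by
  unfold phi; fun_prop

lemma phi_eq {a : ℝ} (ha : 0 < a) :
    phi a = fun x => (4 * π * a) ^ (-(1:ℝ)/2) * Real.exp (-(1/(4*a)) * x^2) := by
  funext x; unfold phi; congr 1; ring

lemma integrable_phi {a : ℝ} (ha : 0 < a) : Integrable (phi a) := by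
  rw [phi_eq ha]
  exact (integrable_exp_neg_mul_sq (by positivity)).const_mul _

lemma integral_phi {a : ℝ} (ha : 0 < a) : ∫ x, phi a x = 1 := by
  have h4 : (0:ℝ) < 4 * π * a := by positivity
  rw [phi_eq ha, integral_const_mul, integral_gaussian]
  have : π / (1/(4*a)) = 4 * π * a := by field_simp
  rw [this, neg_div, Real.rpow_neg h4.le, ← Real.sqrt_eq_rpow]
  rw [inv_mul_cancel₀ (Real.sqrt_ne_zero'.2 h4)]

lemma hasDerivAt_phi {a : ℝ} (ha : 0 < a) (x : ℝ) :
    HasDerivAt (phi a) (-(x/(2*a)) * phi a x) x := by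
  have h1 : HasDerivAt (fun x : ℝ => -x^2/(4*a)) (-(2*x)/(4*a)) x := by
    simpa using ((hasDerivAt_pow 2 x).neg.div_const (4*a))
  have h2 := ((h1.exp).const_mul ((4 * π * a) ^ (-(1:ℝ)/2)))
  convert h2 using 1
  · rfl
  · rfl
  · rfl
  unfold phi; ring

lemma abs_mul_exp_le {a : ℝ} (ha : 0 < a) (x : ℝ) :
    |x| * Real.exp (-x^2/(4*a)) ≤ 2 * Real.sqrt a := by
  have hs : Real.sqrt a * Real.sqrt a = a := Real.mul_self_sqrt ha.le
  have hsp : 0 < Real.sqrt a := Real.sqrt_pos.2 ha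
  have he := Real.add_one_le_exp (x^2/(4*a))
  have h1 : |x| ≤ 2 * Real.sqrt a * (x^2/(4*a) + 1) := by
    rw [show 2*Real.sqrt a*(x^2/(4*a)+1) = (2*Real.sqrt a*(x^2+4*a))/(4*a) by
      field_simp, le_div_iff₀ (by positivity)]
    nlinarith [sq_abs x, abs_nonneg x, sq_nonneg (|x| - 2 * Real.sqrt a)]
  have h2 : |x| ≤ 2 * Real.sqrt a * Real.exp (x^2/(4*a)) := by
    calc |x| ≤ 2 * Real.sqrt a * (x^2/(4*a) + 1) := h1
    _ ≤ 2 * Real.sqrt a * Real.exp (x^2/(4*a)) := by nlinarith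
  have hep : 0 < Real.exp (x^2/(4*a)) := Real.exp_pos _
  rw [show -x^2/(4*a) = -(x^2/(4*a)) by ring, Real.exp_neg]
  rw [mul_inv_le_iff₀ hep]
  linarith

lemma phi_le {a : ℝ} (ha : 0 < a) (x : ℝ) : |x/(2*a) * phi a x| ≤ 1/a := by
  have h4 : (0:ℝ) < 4 * π * a := by positivity
  have hA : (4 * π * a) ^ (-(1:ℝ)/2) = (Real.sqrt (4*π*a))⁻¹ := by
    rw [neg_div, Real.rpow_neg h4.le, ← Real.sqrt_eq_rpow]
  have hsa : Real.sqrt a ≤ Real.sqrt (4*π*a) := by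
    apply Real.sqrt_le_sqrt; nlinarith [Real.pi_gt_three]
  have hsp : 0 < Real.sqrt a := Real.sqrt_pos.2 ha
  have hs4p : 0 < Real.sqrt (4*π*a) := Real.sqrt_pos.2 h4
  have hs : Real.sqrt a * Real.sqrt a = a := Real.mul_self_sqrt ha.le
  have hkey := abs_mul_exp_le ha x
  have hexp : 0 < Real.exp (-x^2/(4*a)) := Real.exp_pos _
  have h0 : |x/(2*a) * phi a x| = |x|/(2*a) * phi a x := by
    rw [abs_mul, abs_div, abs_of_pos (by positivity : (0:ℝ) < 2*a),
      abs_of_nonneg (phi_nonneg ha x)]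
  rw [h0]
  unfold phi
  rw [hA]
  calc |x| / (2*a) * ((Real.sqrt (4*π*a))⁻¹ * Real.exp (-x^2/(4*a)))
      = (|x| * Real.exp (-x^2/(4*a))) * ((Real.sqrt (4*π*a))⁻¹ / (2*a)) := by ring
    _ ≤ (2 * Real.sqrt a) * ((Real.sqrt (4*π*a))⁻¹ / (2*a)) := by
        apply mul_le_mul_of_nonneg_right hkey; positivity
    _ = Real.sqrt a / (Real.sqrt (4*π*a) * a) := by field_simp
    _ ≤ Real.sqrt (4*π*a) / (Real.sqrt (4*π*a) * a) := by gcongr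
    _ = 1/a := by field_simp

lemma main_aux (K : ℝ) (hK : 0 < K) (σs : ℝ) (g : ℝ → ℝ) (hg : ContDiff ℝ 2 g)
    (hg1 : ∀ y, |deriv g y| ≤ K) (hg2 : ∀ y, |deriv (deriv g) y| ≤ K)
    (hsupp : ∀ y, y ∉ Set.Icc σs (σs + 1) → deriv g y = 0)
    {a : ℝ} (ha : 0 < a) (σ : ℝ) :
    |deriv (deriv (fun s => ∫ y : ℝ, g y * phi a (y - s - a))) σ| ≤ min K (K / a) := by
  have hg_diff : Differentiable ℝ g := hg.differentiable two_ne_zero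
  have hG1 : ContDiff ℝ 1 (deriv g) := (contDiff_succ_iff_deriv.mp (by exact_mod_cast hg)).2.2
  have hG1_diff : Differentiable ℝ (deriv g) := hG1.differentiable one_ne_zero
  have hG1_cont : Continuous (deriv g) := hG1_diff.continuous
  have hG2_cont : Continuous (deriv (deriv g)) := hG1.continuous_deriv le_rfl
  -- compact support of deriv g
  have hcs : HasCompactSupport (deriv g) := HasCompactSupport.intro isCompact_Icc hsupp
  -- bound on g
  have hind_int : Integrable (Set.indicator (Set.Icc σs (σs+1)) (fun _ => K)) := by
    rw [integrable_indicator_iff measurableSet_Icc]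
    exact integrableOn_const measure_Icc_lt_top.ne
  have hind_eval : ∫ y, Set.indicator (Set.Icc σs (σs+1)) (fun _ => K) y = K := by
    rw [integral_indicator_const K measurableSet_Icc, Real.volume_real_Icc]
    norm_num
  have hg'_int : Integrable (deriv g) := hG1_cont.integrable_of_hasCompactSupport hcs
  have habs : ∫ y, |deriv g y| ≤ K := by
    rw [← hind_eval]
    refine integral_mono hg'_int.abs hind_int fun y => ?_
    by_cases hy : y ∈ Set.Icc σs (σs+1)
    · rw [Set.indicator_of_mem hy]; exact hg1 y
    · rw [Set.indicator_of_notMem hy, hsupp y hy]; simp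
  have hB : ∀ x, |g x| ≤ |g σs| + K := by
    intro x
    have hftc : ∫ y in σs..x, deriv g y = g x - g σs :=
      intervalIntegral.integral_deriv_eq_sub (fun y _ => hg_diff y)
        (hG1_cont.intervalIntegrable _ _)
    have h1 : |g x - g σs| ≤ K := by
      rw [← hftc]
      calc |∫ y in σs..x, deriv g y| ≤ ∫ y in Set.uIoc σs x, |deriv g y| :=
            by simpa [Real.norm_eq_abs] using
              intervalIntegral.norm_integral_le_integral_norm_uIoc (f := deriv g) (a := σs) (b := x) (μ := volume)
        _ ≤ ∫ y, |deriv g y| :=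
            setIntegral_le_integral hg'_int.abs (Filter.Eventually.of_forall fun y => abs_nonneg _)
        _ ≤ K := habs
    calc |g x| = |g σs + (g x - g σs)| := by ring_nf
      _ ≤ |g σs| + |g x - g σs| := abs_add_le _ _
      _ ≤ |g σs| + K := by linarith
  -- change of variables
  have hchg : ∀ (f : ℝ → ℝ) (s : ℝ),
      (∫ y, f y * phi a (y - s - a)) = ∫ z, f (z + (s + a)) * phi a z := by
    intro f s
    rw [← MeasureTheory.integral_add_right_eq_self (μ := volume)
      (fun y => f y * phi a (y - s - a)) (s + a)]
    congr 1; funext z; congr 2; ring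
  have hveq : (fun s => ∫ y : ℝ, g y * phi a (y - s - a))
      = fun s => ∫ z, g (z + (s + a)) * phi a z := funext fun s => hchg g s
  set J := fun s : ℝ => ∫ z, deriv g (z + (s + a)) * phi a z with hJdef
  -- first derivative
  have hderiv1 : ∀ σ0 : ℝ, HasDerivAt (fun s => ∫ z, g (z + (s + a)) * phi a z) (J σ0) σ0 := by
    intro σ0
    refine (hasDerivAt_integral_of_dominated_loc_of_deriv_le
      (F := fun s z => g (z + (s + a)) * phi a z)
      (F' := fun s z => deriv g (z + (s + a)) * phi a z)
      (x₀ := σ0) (bound := fun z => K * phi a z) (Metric.ball_mem_nhds _ one_pos)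
      (Filter.Eventually.of_forall fun s => (Continuous.aestronglyMeasurable
        ((hg.continuous.comp (continuous_id.add continuous_const)).mul (continuous_phi a))))
      ?_
      (Continuous.aestronglyMeasurable
        ((hG1_cont.comp (continuous_id.add continuous_const)).mul (continuous_phi a)))
      (Filter.Eventually.of_forall fun z s _ => ?_)
      ((integrable_phi ha).const_mul K)
      (Filter.Eventually.of_forall fun z s _ => ?_)).2
    · refine ((integrable_phi ha).const_mul (|g σs| + K)).mono'
        (Continuous.aestronglyMeasurable
          ((hg.continuous.comp (continuous_id.add continuous_const)).mul (continuous_phi a)))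
        (Filter.Eventually.of_forall fun z => ?_)
      rw [Real.norm_eq_abs, abs_mul, abs_of_nonneg (phi_nonneg ha z)]
      exact mul_le_mul_of_nonneg_right (hB _) (phi_nonneg ha z)
    · rw [Real.norm_eq_abs, abs_mul, abs_of_nonneg (phi_nonneg ha z)]
      exact mul_le_mul_of_nonneg_right (hg1 _) (phi_nonneg ha z)
    · have hi : HasDerivAt (fun s : ℝ => z + (s + a)) 1 s := by
        simpa using ((hasDerivAt_id s).add_const a).const_add z
      have ho : HasDerivAt g (deriv g (z + (s + a))) (z + (s + a)) :=
        (hg_diff (z + (s + a))).hasDerivAt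
      simpa [Function.comp] using (ho.comp s hi).mul_const (phi a z)
  -- second derivative, z-form
  set I1 := ∫ z, deriv (deriv g) (z + (σ + a)) * phi a z with hI1def
  have hderiv2 : HasDerivAt J I1 σ := by
    refine (hasDerivAt_integral_of_dominated_loc_of_deriv_le
      (F := fun s z => deriv g (z + (s + a)) * phi a z)
      (F' := fun s z => deriv (deriv g) (z + (s + a)) * phi a z)
      (x₀ := σ) (bound := fun z => K * phi a z) (Metric.ball_mem_nhds _ one_pos)
      (Filter.Eventually.of_forall fun s => (Continuous.aestronglyMeasurable
        ((hG1_cont.comp (continuous_id.add continuous_const)).mul (continuous_phi a))))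
      ?_
      (Continuous.aestronglyMeasurable
        ((hG2_cont.comp (continuous_id.add continuous_const)).mul (continuous_phi a)))
      (Filter.Eventually.of_forall fun z s _ => ?_)
      ((integrable_phi ha).const_mul K)
      (Filter.Eventually.of_forall fun z s _ => ?_)).2
    · refine ((integrable_phi ha).const_mul K).mono'
        (Continuous.aestronglyMeasurable
          ((hG1_cont.comp (continuous_id.add continuous_const)).mul (continuous_phi a)))
        (Filter.Eventually.of_forall fun z => ?_)
      rw [Real.norm_eq_abs, abs_mul, abs_of_nonneg (phi_nonneg ha z)]
      exact mul_le_mul_of_nonneg_right (hg1 _) (phi_nonneg ha z)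
    · rw [Real.norm_eq_abs, abs_mul, abs_of_nonneg (phi_nonneg ha z)]
      exact mul_le_mul_of_nonneg_right (hg2 _) (phi_nonneg ha z)
    · have hi : HasDerivAt (fun s : ℝ => z + (s + a)) 1 s := by
        simpa using ((hasDerivAt_id s).add_const a).const_add z
      have ho : HasDerivAt (deriv g) (deriv (deriv g) (z + (s + a))) (z + (s + a)) :=
        (hG1_diff (z + (s + a))).hasDerivAt
      simpa [Function.comp] using (ho.comp s hi).mul_const (phi a z)
  -- second derivative, y-form
  set I2 := ∫ y, deriv g y * ((y - σ - a)/(2*a) * phi a (y - σ - a)) with hI2def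
  have hind2_int : Integrable (Set.indicator (Set.Icc σs (σs+1)) (fun _ => K * (1/a))) := by
    rw [integrable_indicator_iff measurableSet_Icc]
    exact integrableOn_const measure_Icc_lt_top.ne
  have hbnd2 : ∀ (y s : ℝ), ‖deriv g y * ((y - s - a)/(2*a) * phi a (y - s - a))‖ ≤
      Set.indicator (Set.Icc σs (σs+1)) (fun _ => K * (1/a)) y := by
    intro y s
    by_cases hy : y ∈ Set.Icc σs (σs+1)
    · rw [Set.indicator_of_mem hy, Real.norm_eq_abs, abs_mul]
      exact mul_le_mul (hg1 y) (phi_le ha _) (abs_nonneg _) hK.le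
    · rw [Set.indicator_of_notMem hy, hsupp y hy]; simp
  have hJy : J = fun s => ∫ y, deriv g y * phi a (y - s - a) :=
    funext fun s => (hchg (deriv g) s).symm
  have hderiv3 : HasDerivAt J I2 σ := by
    rw [hJy]
    refine (hasDerivAt_integral_of_dominated_loc_of_deriv_le
      (F := fun s y => deriv g y * phi a (y - s - a))
      (F' := fun s y => deriv g y * ((y - s - a)/(2*a) * phi a (y - s - a)))
      (x₀ := σ) (bound := Set.indicator (Set.Icc σs (σs+1)) (fun _ => K * (1/a))) (Metric.ball_mem_nhds _ one_pos)
      (Filter.Eventually.of_forall fun s => (Continuous.aestronglyMeasurable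
        (hG1_cont.mul ((continuous_phi a).comp (by fun_prop)))))
      ?_
      (Continuous.aestronglyMeasurable (by
        have : Continuous fun y : ℝ => (y - σ - a)/(2*a) * phi a (y - σ - a) := by
          have := continuous_phi a; fun_prop
        exact hG1_cont.mul this))
      (Filter.Eventually.of_forall fun y s _ => hbnd2 y s)
      hind2_int
      (Filter.Eventually.of_forall fun y s _ => ?_)).2
    · refine Continuous.integrable_of_hasCompactSupport
        (hG1_cont.mul ((continuous_phi a).comp (by fun_prop)))
        (HasCompactSupport.intro (K := Set.Icc σs (σs+1)) isCompact_Icc fun y hy => ?_)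
      simp [hsupp y hy]
    · have hi : HasDerivAt (fun s : ℝ => y - s - a) (-1) s := by
        simpa using (((hasDerivAt_id s).const_sub y).sub_const a)
      have ho := hasDerivAt_phi ha (y - s - a)
      have := ((ho.comp s hi).const_mul (deriv g y))
      convert this using 1
      · rfl
      · rfl
      simp [Function.comp]
  have hI12 : I1 = I2 := hderiv2.unique hderiv3
  -- assemble
  have hd1 : deriv (fun s => ∫ y : ℝ, g y * phi a (y - s - a)) = J := by
    funext s
    rw [hveq]
    exact (hderiv1 s).deriv
  rw [hd1, hderiv2.deriv]
  have b1 : |I1| ≤ K := by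
    have h := norm_integral_le_of_norm_le
      (f := fun z => deriv (deriv g) (z + (σ + a)) * phi a z)
      ((integrable_phi ha).const_mul K)
      (Filter.Eventually.of_forall fun z => by
        rw [Real.norm_eq_abs, abs_mul, abs_of_nonneg (phi_nonneg ha z)]
        exact mul_le_mul_of_nonneg_right (hg2 _) (phi_nonneg ha z))
    rw [Real.norm_eq_abs] at h
    calc |I1| ≤ ∫ z, K * phi a z := h
      _ = K * ∫ z, phi a z := integral_const_mul K _
      _ = K := by rw [integral_phi ha, mul_one]
  have b2 : |I2| ≤ K / a := by
    have h := norm_integral_le_of_norm_le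
      (f := fun y => deriv g y * ((y - σ - a)/(2*a) * phi a (y - σ - a)))
      hind2_int
      (Filter.Eventually.of_forall fun y => hbnd2 y σ)
    rw [Real.norm_eq_abs] at h
    calc |I2| ≤ ∫ y, Set.indicator (Set.Icc σs (σs+1)) (fun _ => K * (1/a)) y := h
      _ = K / a := by
          rw [integral_indicator_const _ measurableSet_Icc, Real.volume_real_Icc,
            show σs + 1 - σs = 1 by ring]
          norm_num
          rw [div_eq_mul_inv]
  exact le_min b1 (hI12 ▸ b2)

theorem second_derivative_decay_of_heat_semigroup
    (c K : ℝ) (hc : 0 < c) (hK : 0 < K) :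
    ∃ C : ℝ, ∀ (τs σs : ℝ) (g : ℝ → ℝ), ContDiff ℝ 2 g →
      (∀ y, |deriv g y| ≤ K) →
      (∀ y, |deriv (deriv g) y| ≤ K) →
      (∀ y, y ∉ Set.Icc σs (σs + 1) → deriv g y = 0) →
      ∀ (u : ℝ → ℝ → ℝ),
        (∀ (τ σ : ℝ), τ < τs →
          u τ σ = ∫ y : ℝ, g y * (4 * π * c * (τs - τ)) ^ (-(1 : ℝ) / 2)
            * Real.exp (-(y - σ - c * (τs - τ)) ^ 2 / (4 * c * (τs - τ)))) →
        ∀ (τ σ : ℝ), τ < τs →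
          |deriv (deriv (fun s => u τ s)) σ| ≤ C / (1 + τs - τ) := by
  refine ⟨2*K + 2*K/c, ?_⟩
  intro τs σs g hg hg1 hg2 hsupp u hu τ σ hτ
  have ht : 0 < τs - τ := sub_pos.2 hτ
  set t := τs - τ with htdef
  have ha : 0 < c * t := mul_pos hc ht
  have hfun : (fun s => u τ s) = fun s => ∫ y : ℝ, g y * phi (c*t) (y - s - c*t) := by
    funext s
    rw [hu τ s hτ]
    congr 1
    funext y
    have h1 : 4 * π * c * (τs - τ) = 4 * π * (c * t) := by rw [htdef]; ring
    have h2 : c * (τs - τ) = c * t := by rw [htdef]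
    have h3 : 4 * c * (τs - τ) = 4 * (c * t) := by rw [htdef]; ring
    rw [h1, h2, h3]
    unfold phi
    rw [mul_assoc]
  rw [hfun]
  refine le_trans (main_aux K hK σs g hg hg1 hg2 hsupp ha σ) ?_
  have h1t : 0 < 1 + t := by linarith
  have hgoal : 1 + τs - τ = 1 + t := by rw [htdef]; ring
  rw [hgoal]
  have hkc : (0:ℝ) < K/c := by positivity
  rcases le_or_gt t 1 with h|h
  · refine le_trans (min_le_left _ _) ?_
    rw [le_div_iff₀ h1t, show 2*K/c = 2*(K/c) by ring]
    nlinarith [mul_le_mul_of_nonneg_left h hK.le]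
  · rcases le_or_gt (c*t) 1 with h2|h2
    · refine le_trans (min_le_left _ _) ?_
      rw [le_div_iff₀ h1t, show 2*K/c = 2*(K/c) by ring]
      have h1c : t ≤ 1/c := by rw [le_div_iff₀ hc]; linarith [mul_comm c t]
      have h4 : K*t ≤ K/c := by
        rw [← mul_one_div]
        exact mul_le_mul_of_nonneg_left h1c hK.le
      have h5 : 2*K/c = 2*(K/c) := by ring
      have h6 : K/c = K*(1/c) := by ring
      nlinarith
    · refine le_trans (min_le_right _ _) ?_
      rw [div_le_div_iff₀ ha h1t]
      rw [show (2*K+2*K/c)*(c*t) = 2*K*(c*t) + 2*K*t by field_simp]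
      have h7 : 2*K ≤ 2*K*(c*t) := by nlinarith
      nlinarith [mul_nonneg hK.le ht.le]
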